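/- Let c ∈ ℂ and let k ≥ 1 be an integer such that (c)_k ≠ 0 and (2c)_k ≠ 0. Then the polynomial Q_k(z) has degree exactly ⌊k/2⌋ and has ⌊k/2⌋ distinct roots in ℂ (i.e., Q_k is separable: it has no multiple roots). -/

import Mathlib

open Polynomial Finset

/-- The Gauss hypergeometric polynomial `₂F₁(-k/2, -(k-1)/2; 1-k-c; z)` as a polynomial in `z`,
of degree `⌊k/2⌋`. -/
noncomputable def hypQ (c : ℂ) (k : ℕ) : Polynomial ℂ :=
  ∑ j ∈ Finset.range (k / 2 + 1),
    Polynomial.C ((ascPochhammer ℂ j).eval (-(k : ℂ) / 2) *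
        (ascPochhammer ℂ j).eval (-((k : ℂ) - 1) / 2) /
      ((ascPochhammer ℂ j).eval (1 - (k : ℂ) - c) * (j.factorial : ℂ))) * Polynomial.X ^ j

noncomputable def hA (c : ℂ) (k j : ℕ) : ℂ :=
  (ascPochhammer ℂ j).eval (-(k : ℂ) / 2) * (ascPochhammer ℂ j).eval (-((k : ℂ) - 1) / 2) /
    ((ascPochhammer ℂ j).eval (1 - (k : ℂ) - c) * (j.factorial : ℂ))

lemma asc_eval_prod (x : ℂ) (n : ℕ) :
    (ascPochhammer ℂ n).eval x = ∏ i ∈ Finset.range n, (x + i) := by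
  induction n with
  | zero => simp
  | succ n ih => rw [ascPochhammer_succ_eval, ih, Finset.prod_range_succ]

-- from (c)_k ≠ 0 : each c + i ≠ 0 for i < k



lemma hA_zero_of_gt {c : ℂ} {k j : ℕ} (h : k / 2 < j) : hA c k j = 0 := by
  rcases Nat.even_or_odd k with ⟨l, hl⟩ | ⟨l, hl⟩
  · have hl2 : k / 2 = l := by omega
    have : (ascPochhammer ℂ j).eval (-(k : ℂ) / 2) = 0 := by
      rw [asc_eval_prod]
      refine Finset.prod_eq_zero (Finset.mem_range.mpr (by omega : l < j)) ?_
      have : (k : ℂ) = 2 * l := by rw [hl]; push_cast; ring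
      rw [this]; ring
    rw [hA, this, zero_mul, zero_div]
  · have hl2 : k / 2 = l := by omega
    have : (ascPochhammer ℂ j).eval (-((k : ℂ) - 1) / 2) = 0 := by
      rw [asc_eval_prod]
      refine Finset.prod_eq_zero (Finset.mem_range.mpr (by omega : l < j)) ?_
      have : (k : ℂ) = 2 * l + 1 := by rw [hl]; push_cast; ring
      rw [this]; ring
    rw [hA, this, mul_zero, zero_div]

lemma hypQ_coeff (c : ℂ) (k n : ℕ) : (hypQ c k).coeff n = hA c k n := by
  have he : hypQ c k = ∑ j ∈ Finset.range (k / 2 + 1), Polynomial.C (hA c k j) * Polynomial.X ^ j := rfl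
  rw [he, finset_sum_coeff]
  simp only [coeff_C_mul, coeff_X_pow, mul_ite, mul_one, mul_zero]
  rw [Finset.sum_ite_eq (Finset.range (k / 2 + 1)) n (fun j => hA c k j)]
  simp only [Finset.mem_range]
  split
  · rfl
  · exact (hA_zero_of_gt (by omega)).symm

lemma hA_zero (c : ℂ) (k : ℕ) : hA c k 0 = 1 := by simp [hA]

lemma hc_factor {c : ℂ} {k : ℕ} (hc : (ascPochhammer ℂ k).eval c ≠ 0) {i : ℕ} (hi : i < k) :
    c + i ≠ 0 := by
  rw [asc_eval_prod] at hc
  exact fun h => hc (Finset.prod_eq_zero (Finset.mem_range.mpr hi) h)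

-- denominator Pochhammer nonzero
lemma hden_ne {c : ℂ} {k : ℕ} (hc : (ascPochhammer ℂ k).eval c ≠ 0) {j : ℕ} (hj : j ≤ k) :
    (ascPochhammer ℂ j).eval (1 - (k : ℂ) - c) ≠ 0 := by
  rw [asc_eval_prod]
  refine Finset.prod_ne_zero_iff.mpr fun i hi => ?_
  rw [Finset.mem_range] at hi
  have hik : i < k := lt_of_lt_of_le hi hj
  have h1 : c + ((k - 1 - i : ℕ) : ℂ) ≠ 0 := hc_factor hc (by omega)
  have h2 : ((k - 1 - i : ℕ) : ℂ) = (k : ℂ) - 1 - i := by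
    have he : (k - 1 - i : ℕ) + (1 + i) = k := by omega
    have := congrArg (fun n : ℕ => (n : ℂ)) he
    push_cast at this
    linear_combination this
  intro h
  apply h1
  rw [h2]
  linear_combination -h

lemma hγ_ne {c : ℂ} {k : ℕ} (hc : (ascPochhammer ℂ k).eval c ≠ 0) {j : ℕ} (hj : j < k) :
    (1 - (k : ℂ) - c) + j ≠ 0 := by
  have h1 : c + ((k - 1 - j : ℕ) : ℂ) ≠ 0 := hc_factor hc (by omega)
  have h2 : ((k - 1 - j : ℕ) : ℂ) = (k : ℂ) - 1 - j := by
    have he : (k - 1 - j : ℕ) + (1 + j) = k := by omega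
    have := congrArg (fun n : ℕ => (n : ℂ)) he
    push_cast at this
    linear_combination this
  intro h
  apply h1
  rw [h2]
  linear_combination -h

lemma hA_rec (c : ℂ) (k : ℕ) (hk : 1 ≤ k) (hc : (ascPochhammer ℂ k).eval c ≠ 0) (j : ℕ) :
    ((j : ℂ) + 1) * ((1 - (k : ℂ) - c) + j) * hA c k (j + 1)
      = ((-(k : ℂ) / 2) + j) * ((-((k : ℂ) - 1) / 2) + j) * hA c k j := by
  rcases lt_trichotomy j (k / 2) with hj | hj | hj
  · -- main case
    have hjk : j < k := by omega
    rw [hA, hA, ascPochhammer_succ_eval, ascPochhammer_succ_eval, ascPochhammer_succ_eval,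
      Nat.factorial_succ]
    have d1 : (ascPochhammer ℂ j).eval (1 - (k : ℂ) - c) ≠ 0 := hden_ne hc (by omega)
    have d2 : (1 - (k : ℂ) - c) + j ≠ 0 := hγ_ne hc hjk
    have d3 : (j.factorial : ℂ) ≠ 0 := Nat.cast_ne_zero.mpr (Nat.factorial_ne_zero j)
    have d4 : (j : ℂ) + 1 ≠ 0 := Nat.cast_add_one_ne_zero j
    push_cast
    field_simp
  · -- j = k/2 : RHS has zero factor, LHS hA (j+1) = 0
    rw [hA_zero_of_gt (by omega), mul_zero]
    rcases Nat.even_or_odd k with ⟨l, hl⟩ | ⟨l, hl⟩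
    · have : (-(k : ℂ) / 2) + j = 0 := by
        have : (k : ℂ) = 2 * l := by rw [hl]; push_cast; ring
        rw [this]
        have hjl : ((j : ℕ) : ℂ) = (l : ℂ) := by norm_cast; omega
        rw [hjl]; ring
      rw [this, zero_mul, zero_mul]
    · have : (-((k : ℂ) - 1) / 2) + j = 0 := by
        have h2 : (k : ℂ) = 2 * l + 1 := by rw [hl]; push_cast; ring
        rw [h2]
        have hjl : ((j : ℕ) : ℂ) = (l : ℂ) := by norm_cast; omega
        rw [hjl]; ring
      rw [this, mul_zero, zero_mul]
  · -- j > k/2 : both sides zero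
    rw [hA_zero_of_gt (by omega), hA_zero_of_gt (by omega), mul_zero, mul_zero]

lemma hA_top_ne (c : ℂ) (k : ℕ) (hk : 1 ≤ k) (hc : (ascPochhammer ℂ k).eval c ≠ 0) :
    hA c k (k / 2) ≠ 0 := by
  rw [hA]
  apply div_ne_zero
  · apply mul_ne_zero <;> rw [asc_eval_prod] <;>
      refine Finset.prod_ne_zero_iff.mpr fun i hi => ?_ <;> rw [Finset.mem_range] at hi
    · intro h
      have hk2 : (k : ℂ) = 2 * i := by linear_combination -2 * h
      have : k = 2 * i := by exact_mod_cast hk2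
      omega
    · intro h
      have hk2 : (k : ℂ) = 2 * i + 1 := by linear_combination -2 * h
      have : k = 2 * i + 1 := by exact_mod_cast hk2
      omega
  · exact mul_ne_zero (hden_ne hc (by omega)) (Nat.cast_ne_zero.mpr (Nat.factorial_ne_zero (k/2)))

lemma hyp_ode (c : ℂ) (k : ℕ) (hk : 1 ≤ k) (hc : (ascPochhammer ℂ k).eval c ≠ 0) :
    derivative (derivative (hypQ c k)) * (X ^ 1 - X ^ 2)
      + derivative (hypQ c k) * (C (1 - (k : ℂ) - c)
          - C ((-(k : ℂ) / 2) + (-((k : ℂ) - 1) / 2) + 1) * X ^ 1)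
      + hypQ c k * C (-((-(k : ℂ) / 2) * (-((k : ℂ) - 1) / 2))) = 0 := by
  have R := hA_rec c k hk hc
  ext n
  simp only [mul_sub, ← mul_assoc, coeff_add, coeff_sub, coeff_zero, coeff_mul_X_pow',
    coeff_mul_C, coeff_derivative, hypQ_coeff]
  rcases n with _ | _ | n
  · norm_num
    linear_combination R 0
  · norm_num
    have R1 := R 1
    push_cast at R1
    linear_combination R1
  · norm_num [Nat.succ_sub_one]
    simp only [show n + 1 + 1 - 2 = n from rfl]
    have Rn := R (n + 1 + 1)
    push_cast at Rn ⊢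
    linear_combination Rn

lemma ode_step {p : Polynomial ℂ} {γ s t : ℂ}
    (h : derivative (derivative p) * (X ^ 1 - X ^ 2) + derivative p * (C γ - C s * X ^ 1)
        + p * C t = 0) :
    derivative (derivative (derivative p)) * (X ^ 1 - X ^ 2)
      + derivative (derivative p) * (C (γ + 1) - C (s + 2) * X ^ 1)
      + derivative p * C (t - s) = 0 := by
  have h' := congrArg derivative h
  simp only [derivative_add, derivative_mul, derivative_sub, derivative_pow, derivative_X,
    derivative_C, derivative_zero, Nat.cast_ofNat, pow_one, map_ofNat] at h'
  simp only [map_add, map_sub, C_1, map_ofNat]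
  linear_combination h'

lemma ode_iter (c : ℂ) (k : ℕ) (hk : 1 ≤ k) (hc : (ascPochhammer ℂ k).eval c ≠ 0) (n : ℕ) :
    derivative (derivative (derivative^[n] (hypQ c k))) * (X ^ 1 - X ^ 2)
      + derivative (derivative^[n] (hypQ c k)) *
          (C ((1 - (k : ℂ) - c) + n)
            - C (((-(k : ℂ) / 2) + (-((k : ℂ) - 1) / 2) + 1) + 2 * n) * X ^ 1)
      + derivative^[n] (hypQ c k) *
          C ((-((-(k : ℂ) / 2) * (-((k : ℂ) - 1) / 2)))
              - n * ((-(k : ℂ) / 2) + (-((k : ℂ) - 1) / 2) + 1) - n * (n - 1)) = 0 := by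
  induction n with
  | zero =>
    have h := hyp_ode c k hk hc
    push_cast
    convert h using 4 <;> norm_num
  | succ n ih =>
    have h := ode_step ih
    have e1 : ((1 - (k : ℂ) - c) + n) + 1 = (1 - (k : ℂ) - c) + (n + 1 : ℕ) := by push_cast; ring
    have e2 : (((-(k : ℂ) / 2) + (-((k : ℂ) - 1) / 2) + 1) + 2 * n) + 2
        = ((-(k : ℂ) / 2) + (-((k : ℂ) - 1) / 2) + 1) + 2 * (n + 1 : ℕ) := by push_cast; ring
    have e3 : ((-((-(k : ℂ) / 2) * (-((k : ℂ) - 1) / 2)))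
              - n * ((-(k : ℂ) / 2) + (-((k : ℂ) - 1) / 2) + 1) - n * (n - 1))
            - (((-(k : ℂ) / 2) + (-((k : ℂ) - 1) / 2) + 1) + 2 * n)
        = (-((-(k : ℂ) / 2) * (-((k : ℂ) - 1) / 2)))
              - (n + 1 : ℕ) * ((-(k : ℂ) / 2) + (-((k : ℂ) - 1) / 2) + 1)
              - (n + 1 : ℕ) * ((n + 1 : ℕ) - 1) := by push_cast; ring
    rw [e1, e2, e3] at h
    simpa [Function.iterate_succ_apply'] using h

lemma eval_one_ne (c : ℂ) (k : ℕ) (hk : 1 ≤ k) (hc : (ascPochhammer ℂ k).eval c ≠ 0)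
    (h2c : (ascPochhammer ℂ k).eval (2 * c) ≠ 0) : (hypQ c k).eval 1 ≠ 0 := by
  intro h0
  set m := k / 2 with hm
  have key : ∀ n, n ≤ m → (derivative^[n] (hypQ c k)).eval 1 = 0 := by
    intro n
    induction n with
    | zero => intro _; simpa using h0
    | succ n ih =>
      intro hn
      have h1 := ih (by omega)
      have hev := congrArg (Polynomial.eval 1) (ode_iter c k hk hc n)
      simp only [eval_add, eval_mul, eval_sub, eval_pow, eval_X, eval_C, eval_zero, one_pow] at hev
      have hne : (1 - (k : ℂ) - c) + n
          - ((((-(k : ℂ) / 2) + (-((k : ℂ) - 1) / 2) + 1) + 2 * n)) ≠ 0 := by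
        have h21 : 2 * c + ((2 * n + 1 : ℕ) : ℂ) ≠ 0 := hc_factor h2c (by omega)
        intro h
        apply h21
        push_cast
        linear_combination -2 * h
      have hz : (derivative (derivative^[n] (hypQ c k))).eval 1
          * ((1 - (k : ℂ) - c) + n
            - ((((-(k : ℂ) / 2) + (-((k : ℂ) - 1) / 2) + 1) + 2 * n))) = 0 := by
        linear_combination hev - ((-((-(k : ℂ) / 2) * (-((k : ℂ) - 1) / 2)))
              - n * ((-(k : ℂ) / 2) + (-((k : ℂ) - 1) / 2) + 1) - n * ((n : ℂ) - 1)) * h1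
      rw [Function.iterate_succ_apply']
      exact (mul_eq_zero.mp hz).resolve_right hne
  have hend := key m le_rfl
  have hC : derivative^[m] (hypQ c k) = C ((m.factorial : ℂ) * hA c k m) := by
    ext i
    rcases i with _ | i
    · rw [coeff_iterate_derivative, hypQ_coeff]
      simp [Nat.descFactorial_self, nsmul_eq_mul]
    · rw [coeff_iterate_derivative, hypQ_coeff, hA_zero_of_gt (by omega)]
      simp [coeff_C]
  rw [hC, eval_C] at hend
  rcases mul_eq_zero.mp hend with h | h
  · exact Nat.cast_ne_zero.mpr (Nat.factorial_ne_zero m) h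
  · exact hA_top_ne c k hk hc h

lemma hypQ_ne_zero (c : ℂ) (k : ℕ) : hypQ c k ≠ 0 := fun h => by
  have := congrArg (fun p : Polynomial ℂ => p.coeff 0) h
  simp [hypQ_coeff, hA_zero] at this

lemma hyp_sep (c : ℂ) (k : ℕ) (hk : 1 ≤ k) (hc : (ascPochhammer ℂ k).eval c ≠ 0)
    (h2c : (ascPochhammer ℂ k).eval (2 * c) ≠ 0) : (hypQ c k).Separable := by
  rw [Polynomial.separable_def, Polynomial.isCoprime_iff_aeval_ne_zero_of_isAlgClosed ℂ ℂ (hypQ c k) (derivative (hypQ c k))]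
  intro z
  by_contra hcon
  push_neg at hcon
  obtain ⟨hQz, hQ'z⟩ := hcon
  simp only [coe_aeval_eq_eval] at hQz hQ'z
  set Q := hypQ c k with hQdef
  have hQne : Q ≠ 0 := hypQ_ne_zero c k
  have hz0 : z ≠ 0 := by
    intro h
    rw [h, ← coeff_zero_eq_eval_zero] at hQz
    simp [hQdef, hypQ_coeff, hA_zero] at hQz
  have hz1 : z ≠ 1 := by
    intro h
    rw [h] at hQz
    exact eval_one_ne c k hk hc h2c hQz
  have hQ'ne : derivative Q ≠ 0 := by
    intro h
    have h0 := natDegree_eq_zero_of_derivative_eq_zero h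
    have := eq_C_of_natDegree_eq_zero h0
    rw [this, eval_C] at hQz
    have : Q.coeff 0 = 0 := hQz
    simp [hQdef, hypQ_coeff, hA_zero] at this
  set r := rootMultiplicity z Q with hr
  have hr1 : 1 ≤ r := (rootMultiplicity_pos hQne).mpr hQz
  have hder : (derivative Q).rootMultiplicity z = r - 1 := derivative_rootMultiplicity_of_root hQz
  have hr2 : 2 ≤ r := by
    have : 1 ≤ (derivative Q).rootMultiplicity z := (rootMultiplicity_pos hQ'ne).mpr hQ'z
    omega
  have hQ''ne : derivative (derivative Q) ≠ 0 := by
    intro h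
    have h0 := natDegree_eq_zero_of_derivative_eq_zero h
    have hC := eq_C_of_natDegree_eq_zero h0
    rw [hC, eval_C] at hQ'z
    apply hQ'ne
    rw [hC, hQ'z, map_zero]
  have hder2 : (derivative (derivative Q)).rootMultiplicity z = r - 1 - 1 := by
    rw [derivative_rootMultiplicity_of_root hQ'z, hder]
  -- divisibility
  have hode := hyp_ode c k hk hc
  have hdvd1 : (X - C z) ^ (r - 1) ∣ derivative Q := by
    rw [← hder]; exact pow_rootMultiplicity_dvd _ _
  have hdvd0 : (X - C z) ^ (r - 1) ∣ Q :=
    dvd_trans (pow_dvd_pow _ (by omega)) (pow_rootMultiplicity_dvd Q z)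
  have hdvd2 : (X - C z) ^ (r - 1) ∣ derivative (derivative Q) * (X ^ 1 - X ^ 2) := by
    have : derivative (derivative Q) * (X ^ 1 - X ^ 2)
        = -(derivative Q * (C (1 - (k : ℂ) - c)
            - C ((-(k : ℂ) / 2) + (-((k : ℂ) - 1) / 2) + 1) * X ^ 1))
          - Q * C (-((-(k : ℂ) / 2) * (-((k : ℂ) - 1) / 2))) := by
      linear_combination hode
    rw [this]
    exact dvd_sub (dvd_neg.mpr (Dvd.dvd.mul_right hdvd1 _)) (Dvd.dvd.mul_right hdvd0 _)
  have hXne : (X ^ 1 - X ^ 2 : Polynomial ℂ) ≠ 0 := by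
    intro h
    have := congrArg (Polynomial.eval 2) h
    norm_num at this
  have hmul : (derivative (derivative Q) * (X ^ 1 - X ^ 2)).rootMultiplicity z = r - 1 - 1 := by
    have hnr : ¬ (X ^ 1 - X ^ 2 : Polynomial ℂ).IsRoot z := by
      simp only [IsRoot, eval_sub, eval_pow, eval_X, pow_one]
      intro h
      rcases mul_eq_zero.mp (show z * (1 - z) = 0 by linear_combination h) with h' | h'
      · exact hz0 h'
      · exact hz1 (by linear_combination -h')
    rw [rootMultiplicity_mul (mul_ne_zero hQ''ne hXne), hder2, rootMultiplicity_eq_zero hnr]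
    omega
  have := (Polynomial.le_rootMultiplicity_iff (mul_ne_zero hQ''ne hXne)).mpr hdvd2
  rw [hmul] at this
  omega

/-- `Q k` has degree exactly `⌊k/2⌋` and `⌊k/2⌋` distinct roots, i.e. it has no multiple roots. -/
theorem stmt_5 (c : ℂ) (k : ℕ) (hk : 1 ≤ k)
    (hc : (ascPochhammer ℂ k).eval c ≠ 0)
    (h2c : (ascPochhammer ℂ k).eval (2 * c) ≠ 0) :
    (hypQ c k).natDegree = k / 2 ∧ (hypQ c k).roots.toFinset.card = k / 2 ∧
      Squarefree (hypQ c k) := by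
  have hsep := hyp_sep c k hk hc h2c
  have hdeg : (hypQ c k).natDegree = k / 2 := by
    refine le_antisymm ?_ ?_
    · refine Polynomial.natDegree_le_iff_coeff_eq_zero.mpr fun n hn => ?_
      rw [hypQ_coeff, hA_zero_of_gt hn]
    · exact Polynomial.le_natDegree_of_ne_zero (by rw [hypQ_coeff]; exact hA_top_ne c k hk hc)
  refine ⟨hdeg, ?_, PerfectField.separable_iff_squarefree.mp hsep⟩
  have hnd : (hypQ c k).roots.Nodup := Polynomial.nodup_roots hsep
  rw [Multiset.toFinset_card_of_nodup hnd, ← hdeg]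
  have hs : (hypQ c k).natDegree = (hypQ c k).roots.card :=
    IsAlgClosed.card_roots_eq_natDegree.symm
  simpa [Polynomial.map_id] using hs.symm
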